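/- (q-analog of the Itô isometry.) Let 0<q<1, t>0, and let f(x,s) = ∑_{m=0}^d (b_m(s)/[m]_q!)·h_m(x;s), where each b_m:[0,∞)→ℝ is bounded on [0,t]. Under the q-Brownian hypotheses on (B_s), the series J_m := ∑_{k=0}^∞ b_m(q^k t)·(h_{m+1}(B_{q^k t}; q^k t) − h_{m+1}(B_{q^{k+1} t}; q^{k+1} t)) converges almost surely and in L²(P) for each 0≤m≤d, and the random variable I := ∑_{m=0}^d (1/[m+1]_q!)·J_m satisfies E[I²] = (1−q)·t·∑_{k=0}^∞ q^k·E[f(B_{q^k t}, q^k t)²], i.e. E[(∫_0^t f(B_s,s) d̶B^{(q)})²] = ∫_0^t E[f(B_s,s)²] d_q s, where the right-hand side is the Jackson q-integral and equals ∑_{m=0}^d (1/[m]_q!)·∫_0^t b_m(s)²·s^m d_q s. -/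

import Mathlib

open MeasureTheory Filter

/-- `[n]_q = 1 + q + ⋯ + q^{n-1}`. -/
noncomputable def qNat (q : ℝ) (n : ℕ) : ℝ := ∑ i ∈ Finset.range n, q ^ i

/-- `[n]_q! = [1]_q [2]_q ⋯ [n]_q`. -/
noncomputable def qFact (q : ℝ) (n : ℕ) : ℝ := ∏ i ∈ Finset.range n, qNat q (i + 1)

/-- Monic continuous q-Hermite polynomials: `h_0 = 1`, `h_1 = x`,
`x·h_n(x;t) = h_{n+1}(x;t) + t·[n]_q·h_{n−1}(x;t)`. -/
noncomputable def qH (q : ℝ) : ℕ → ℝ → ℝ → ℝ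
  | 0, _, _ => 1
  | 1, x, _ => x
  | (n + 2), x, t => x * qH q (n + 1) x t - t * qNat q (n + 1) * qH q n x t

lemma qNat_nonneg {q : ℝ} (hq : 0 ≤ q) (n : ℕ) : 0 ≤ qNat q n :=
  Finset.sum_nonneg fun i _ => pow_nonneg hq i

lemma qNat_pos {q : ℝ} (hq : 0 ≤ q) (n : ℕ) : 0 < qNat q (n + 1) := by
  have h1 : (1 : ℝ) ≤ qNat q (n + 1) := by
    have := Finset.single_le_sum (f := fun i => q ^ i)
      (fun i _ => pow_nonneg hq i) (Finset.mem_range.mpr (Nat.succ_pos n))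
    simpa [qNat] using this
  linarith

lemma qNat_le {q : ℝ} (hq0 : 0 ≤ q) (hq1 : q ≤ 1) (n : ℕ) : qNat q n ≤ n := by
  calc qNat q n ≤ ∑ i ∈ Finset.range n, (1 : ℝ) :=
        Finset.sum_le_sum fun i _ => pow_le_one₀ hq0 hq1
    _ = n := by simp

lemma qFact_pos {q : ℝ} (hq : 0 ≤ q) (n : ℕ) : 0 < qFact q n :=
  Finset.prod_pos fun i _ => qNat_pos hq i

lemma qFact_succ (q : ℝ) (n : ℕ) : qFact q (n + 1) = qFact q n * qNat q (n + 1) :=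
  Finset.prod_range_succ _ n

lemma one_sub_mul_qNat (q : ℝ) (n : ℕ) : (1 - q) * qNat q n = 1 - q ^ n := by
  have := geom_sum_mul q n
  unfold qNat
  nlinarith [this]

lemma real_sqrt_pow {q : ℝ} (hq : 0 ≤ q) (k : ℕ) : Real.sqrt (q ^ k) = Real.sqrt q ^ k := by
  induction k with
  | zero => simp
  | succ n ih => rw [pow_succ, pow_succ, Real.sqrt_mul (pow_nonneg hq n), ih]

lemma qH_continuous (q : ℝ) (u : ℝ) : ∀ n, Continuous fun x => qH q n x u := by
  have key : ∀ n, Continuous (fun x => qH q n x u) ∧ Continuous (fun x => qH q (n + 1) x u) := by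
    intro n
    induction n with
    | zero => exact ⟨by simpa [qH] using continuous_const, by simpa [qH] using continuous_id'⟩
    | succ n ih =>
      refine ⟨ih.2, ?_⟩
      show Continuous fun x => x * qH q (n + 1) x u - u * qNat q (n + 1) * qH q n x u
      exact (continuous_id.mul ih.2).sub (continuous_const.mul ih.1)
  exact fun n => (key n).1

noncomputable def qHC (q : ℝ) : ℕ → ℝ
  | 0 => 1
  | 1 => 2 / Real.sqrt (1 - q)
  | (n + 2) => 2 / Real.sqrt (1 - q) * qHC q (n + 1) + (n + 1) * qHC q n

lemma qHC_nonneg {q : ℝ} (hq1 : q < 1) : ∀ n, 0 ≤ qHC q n := by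
  have h2 : (0:ℝ) ≤ 2 / Real.sqrt (1 - q) :=
    div_nonneg (by norm_num) (Real.sqrt_nonneg _)
  have key : ∀ n, 0 ≤ qHC q n ∧ 0 ≤ qHC q (n + 1) := by
    intro n
    induction n with
    | zero => exact ⟨by rw [show qHC q 0 = 1 from rfl]; norm_num, by rw [show qHC q 1 = 2 / Real.sqrt (1 - q) from rfl]; exact h2⟩
    | succ n ih =>
      refine ⟨ih.2, ?_⟩
      show 0 ≤ 2 / Real.sqrt (1 - q) * qHC q (n + 1) + (n + 1) * qHC q n
      exact add_nonneg (mul_nonneg h2 ih.2) (mul_nonneg (by positivity) ih.1)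
  exact fun n => (key n).1

lemma qH_abs_le {q : ℝ} (hq0 : 0 ≤ q) (hq1 : q < 1) (u x : ℝ) (hu : 0 ≤ u)
    (hx : |x| ≤ 2 * Real.sqrt u / Real.sqrt (1 - q)) :
    ∀ n, |qH q n x u| ≤ qHC q n * Real.sqrt u ^ n := by
  have hsu : 0 ≤ Real.sqrt u := Real.sqrt_nonneg u
  have key : ∀ n, |qH q n x u| ≤ qHC q n * Real.sqrt u ^ n ∧
      |qH q (n + 1) x u| ≤ qHC q (n + 1) * Real.sqrt u ^ (n + 1) := by
    intro n
    induction n with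
    | zero =>
      constructor
      · simp [qH, qHC]
      · show |x| ≤ qHC q 1 * Real.sqrt u ^ 1
        rw [show qHC q 1 = 2 / Real.sqrt (1 - q) from rfl]
        calc |x| ≤ 2 * Real.sqrt u / Real.sqrt (1 - q) := hx
          _ = 2 / Real.sqrt (1 - q) * Real.sqrt u ^ 1 := by ring
    | succ n ih =>
      refine ⟨ih.2, ?_⟩
      show |x * qH q (n + 1) x u - u * qNat q (n + 1) * qH q n x u| ≤
        qHC q (n + 2) * Real.sqrt u ^ (n + 2)
      have h1 : |x * qH q (n + 1) x u| ≤
          2 / Real.sqrt (1 - q) * qHC q (n + 1) * Real.sqrt u ^ (n + 2) := by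
        rw [abs_mul]
        calc |x| * |qH q (n + 1) x u|
            ≤ (2 * Real.sqrt u / Real.sqrt (1 - q)) * (qHC q (n + 1) * Real.sqrt u ^ (n + 1)) :=
              mul_le_mul hx ih.2 (abs_nonneg _) (by positivity)
          _ = 2 / Real.sqrt (1 - q) * qHC q (n + 1) * Real.sqrt u ^ (n + 2) := by ring
      have h2 : |u * qNat q (n + 1) * qH q n x u| ≤
          (n + 1) * qHC q n * Real.sqrt u ^ (n + 2) := by
        rw [abs_mul, abs_mul, abs_of_nonneg hu, abs_of_nonneg (qNat_nonneg hq0 _)]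
        have hq' : qNat q (n + 1) ≤ (n + 1 : ℝ) := by
          have := qNat_le hq0 hq1.le (n + 1); push_cast at this ⊢; linarith
        have husq : u = Real.sqrt u ^ 2 := (Real.sq_sqrt hu).symm
        calc u * qNat q (n + 1) * |qH q n x u|
            ≤ u * (n + 1) * (qHC q n * Real.sqrt u ^ n) := by
              apply mul_le_mul
              · exact mul_le_mul_of_nonneg_left hq' hu
              · exact ih.1
              · exact abs_nonneg _
              · positivity
          _ = (n + 1) * qHC q n * Real.sqrt u ^ (n + 2) := by
              have hupow : Real.sqrt u ^ (n + 2) = u * Real.sqrt u ^ n := by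
                rw [pow_add, Real.sq_sqrt hu]; ring
              rw [hupow]; ring
      calc |x * qH q (n + 1) x u - u * qNat q (n + 1) * qH q n x u|
          ≤ |x * qH q (n + 1) x u| + |u * qNat q (n + 1) * qH q n x u| := abs_sub _ _
        _ ≤ 2 / Real.sqrt (1 - q) * qHC q (n + 1) * Real.sqrt u ^ (n + 2)
            + (n + 1) * qHC q n * Real.sqrt u ^ (n + 2) := add_le_add h1 h2
        _ = qHC q (n + 2) * Real.sqrt u ^ (n + 2) := by
            rw [show qHC q (n + 2) = 2 / Real.sqrt (1 - q) * qHC q (n + 1) + (n + 1) * qHC q n from rfl]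
            ring
  exact fun n => (key n).1

section main

variable {Ω : Type*} [m0 : MeasurableSpace Ω] {μ : Measure Ω} [IsProbabilityMeasure μ]

lemma qH_ae_bound {q : ℝ} (hq0 : 0 ≤ q) (hq1 : q < 1) {B : ℝ → Ω → ℝ} {s : ℝ} (hs : 0 ≤ s)
    (h : ∀ᵐ ω ∂μ, |B s ω| ≤ 2 * Real.sqrt s / Real.sqrt (1 - q)) (n : ℕ) :
    ∀ᵐ ω ∂μ, |qH q n (B s ω) s| ≤ qHC q n * Real.sqrt s ^ n :=
  h.mono fun ω hω => qH_abs_le hq0 hq1 s (B s ω) hs hω n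

lemma qH_integrable {q : ℝ} (hq0 : 0 ≤ q) (hq1 : q < 1) {B : ℝ → Ω → ℝ} {s : ℝ} (hs : 0 ≤ s)
    (hm : Measurable (B s))
    (h : ∀ᵐ ω ∂μ, |B s ω| ≤ 2 * Real.sqrt s / Real.sqrt (1 - q)) (n : ℕ) :
    Integrable (fun ω => qH q n (B s ω) s) μ := by
  refine Integrable.mono' (integrable_const (qHC q n * Real.sqrt s ^ n))
    (((qH_continuous q s n).measurable.comp hm).aestronglyMeasurable) ?_
  simpa [Real.norm_eq_abs] using qH_ae_bound hq0 hq1 hs h n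

lemma qH_mul_integrable {q : ℝ} (hq0 : 0 ≤ q) (hq1 : q < 1) {B : ℝ → Ω → ℝ} {s u : ℝ}
    (hs : 0 ≤ s) (hu : 0 ≤ u) (hms : Measurable (B s)) (hmu : Measurable (B u))
    (hbs : ∀ᵐ ω ∂μ, |B s ω| ≤ 2 * Real.sqrt s / Real.sqrt (1 - q))
    (hbu : ∀ᵐ ω ∂μ, |B u ω| ≤ 2 * Real.sqrt u / Real.sqrt (1 - q)) (n m : ℕ) :
    Integrable (fun ω => qH q n (B u ω) u * qH q m (B s ω) s) μ := by
  refine Integrable.mono' (integrable_const ((qHC q n * Real.sqrt u ^ n) * (qHC q m * Real.sqrt s ^ m)))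
    (((qH_continuous q u n).measurable.comp hmu).aestronglyMeasurable.mul
      ((qH_continuous q s m).measurable.comp hms).aestronglyMeasurable) ?_
  filter_upwards [qH_ae_bound hq0 hq1 hs hbs m, qH_ae_bound hq0 hq1 hu hbu n] with ω h1 h2
  rw [Real.norm_eq_abs, abs_mul]
  exact mul_le_mul h2 h1 (abs_nonneg _) (mul_nonneg (qHC_nonneg hq1 n) (pow_nonneg (Real.sqrt_nonneg u) n))

lemma crossE {q : ℝ} (hq0 : 0 ≤ q) (hq1 : q < 1) (ℱ : Filtration ℝ m0) {B : ℝ → Ω → ℝ}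
    (hadp : Adapted ℱ B)
    (hbdd : ∀ s : ℝ, 0 ≤ s → ∀ᵐ ω ∂μ, |B s ω| ≤ 2 * Real.sqrt s / Real.sqrt (1 - q))
    (hmart : ∀ (n : ℕ) (s u : ℝ), 0 ≤ s → s ≤ u →
      μ[fun ω => qH q n (B u ω) u | ℱ s] =ᵐ[μ] fun ω => qH q n (B s ω) s)
    (horth : ∀ s : ℝ, 0 < s → ∀ m n : ℕ,
      ∫ ω, qH q n (B s ω) s * qH q m (B s ω) s ∂μ =
        if m = n then qFact q n * s ^ n else 0)
    (n m : ℕ) (u s : ℝ) (hs : 0 < s) (hsu : s ≤ u) :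
    ∫ ω, qH q n (B u ω) u * qH q m (B s ω) s ∂μ = if m = n then qFact q n * s ^ n else 0 := by
  have hu : (0:ℝ) ≤ u := hs.le.trans hsu
  have hms : Measurable (B s) := (hadp s).mono (ℱ.le s) le_rfl
  have hmu : Measurable (B u) := (hadp u).mono (ℱ.le u) le_rfl
  set X : Ω → ℝ := fun ω => qH q n (B u ω) u with hX
  set Y : Ω → ℝ := fun ω => qH q m (B s ω) s with hY
  have hXint : Integrable X μ := qH_integrable hq0 hq1 hu hmu (hbdd u hu) n
  have hYXint : Integrable (Y * X) μ := by
    have := qH_mul_integrable hq0 hq1 (s := u) (u := s) hu hs.le hmu hms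
      (hbdd u hu) (hbdd s hs.le) m n
    exact this
  have hYsm : StronglyMeasurable[ℱ s] Y :=
    ((qH_continuous q s m).measurable.comp (hadp s)).stronglyMeasurable
  have step1 : ∫ ω, X ω * Y ω ∂μ = ∫ ω, (Y * X) ω ∂μ := by
    refine integral_congr_ae (Filter.Eventually.of_forall fun ω => ?_)
    simp [mul_comm]
  have step2 : ∫ ω, (Y * X) ω ∂μ = ∫ ω, (μ[Y * X | ℱ s]) ω ∂μ :=
    (integral_condExp (ℱ.le s)).symm
  have step3 : μ[Y * X | ℱ s] =ᵐ[μ] Y * μ[X | ℱ s] :=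
    condExp_mul_of_stronglyMeasurable_left hYsm hYXint hXint
  have step4 : Y * μ[X | ℱ s] =ᵐ[μ] fun ω => qH q n (B s ω) s * qH q m (B s ω) s := by
    filter_upwards [hmart n s u hs.le hsu] with ω hω
    simp only [Pi.mul_apply, hX, hY, hω]
    ring
  calc ∫ ω, X ω * Y ω ∂μ = ∫ ω, (Y * X) ω ∂μ := step1
    _ = ∫ ω, (μ[Y * X | ℱ s]) ω ∂μ := step2
    _ = ∫ ω, qH q n (B s ω) s * qH q m (B s ω) s ∂μ :=
        integral_congr_ae (step3.trans (Filter.EventuallyEq.trans (ae_eq_refl _) step4))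
    _ = if m = n then qFact q n * s ^ n else 0 := horth s hs m n

end main

/-- q-analog of the Itô isometry. For a polynomial integrand
`f(x,s) = ∑_{m≤d} (b_m(s)/[m]_q!) h_m(x;s)` with coefficients bounded on `[0,t]`,
each Jackson series `J_m = ∑_k b_m(q^k t)(h_{m+1}(B_{q^k t};q^k t) − h_{m+1}(B_{q^{k+1}t};q^{k+1}t))`
converges a.s. and in `L²`, and `I = ∑_{m≤d} J_m/[m+1]_q!` satisfies
`E[I²] = (1−q) t ∑_k q^k E[f(B_{q^k t},q^k t)²] = ∑_{m≤d} (1/[m]_q!) ∫_0^t b_m(s)² s^m d_q s`. -/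
theorem q_ito_isometry
    {Ω : Type*} [m0 : MeasurableSpace Ω] (μ : Measure Ω) [IsProbabilityMeasure μ]
    (ℱ : Filtration ℝ m0) (q t : ℝ) (hq0 : 0 < q) (hq1 : q < 1) (ht : 0 < t)
    (B : ℝ → Ω → ℝ) (hadp : Adapted ℱ B) (hB0 : ∀ ω, B 0 ω = 0)
    (hbdd : ∀ s : ℝ, 0 ≤ s → ∀ᵐ ω ∂μ, |B s ω| ≤ 2 * Real.sqrt s / Real.sqrt (1 - q))
    (hmart : ∀ (n : ℕ) (s u : ℝ), 0 ≤ s → s ≤ u →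
      μ[fun ω => qH q n (B u ω) u | ℱ s] =ᵐ[μ] fun ω => qH q n (B s ω) s)
    (horth : ∀ s : ℝ, 0 < s → ∀ m n : ℕ,
      ∫ ω, qH q n (B s ω) s * qH q m (B s ω) s ∂μ =
        if m = n then qFact q n * s ^ n else 0)
    (d : ℕ) (b : ℕ → ℝ → ℝ)
    (hb : ∀ m ≤ d, ∃ M : ℝ, ∀ s ∈ Set.Icc (0 : ℝ) t, |b m s| ≤ M) :
    ∃ J : ℕ → Ω → ℝ,
      (∀ m ≤ d,
        (∀ᵐ ω ∂μ, Tendsto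
          (fun N : ℕ => ∑ k ∈ Finset.range N, b m (q ^ k * t) *
            (qH q (m + 1) (B (q ^ k * t) ω) (q ^ k * t) -
             qH q (m + 1) (B (q ^ (k + 1) * t) ω) (q ^ (k + 1) * t)))
          atTop (nhds (J m ω))) ∧
        Tendsto (fun N : ℕ => ∫ ω,
            (∑ k ∈ Finset.range N, b m (q ^ k * t) *
              (qH q (m + 1) (B (q ^ k * t) ω) (q ^ k * t) -
               qH q (m + 1) (B (q ^ (k + 1) * t) ω) (q ^ (k + 1) * t)) - J m ω) ^ 2 ∂μ)
          atTop (nhds 0)) ∧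
      (∫ ω, (∑ m ∈ Finset.range (d + 1), (1 / qFact q (m + 1)) * J m ω) ^ 2 ∂μ =
        (1 - q) * t * ∑' k : ℕ, q ^ k *
          ∫ ω, (∑ m ∈ Finset.range (d + 1),
            b m (q ^ k * t) / qFact q m * qH q m (B (q ^ k * t) ω) (q ^ k * t)) ^ 2 ∂μ) ∧
      ((1 - q) * t * ∑' k : ℕ, q ^ k *
          ∫ ω, (∑ m ∈ Finset.range (d + 1),
            b m (q ^ k * t) / qFact q m * qH q m (B (q ^ k * t) ω) (q ^ k * t)) ^ 2 ∂μ =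
        ∑ m ∈ Finset.range (d + 1), (1 / qFact q m) *
          ((1 - q) * t * ∑' k : ℕ, q ^ k * (b m (q ^ k * t)) ^ 2 * (q ^ k * t) ^ m)) := by
  classical
  have hq01 : (0:ℝ) ≤ q := hq0.le
  have h1q : (0:ℝ) < 1 - q := by linarith
  have hsp : ∀ k : ℕ, 0 < q ^ k * t := fun k => mul_pos (pow_pos hq0 k) ht
  have hsmono : ∀ a c : ℕ, a ≤ c → q ^ c * t ≤ q ^ a * t := fun a c hac =>
    mul_le_mul_of_nonneg_right (pow_le_pow_of_le_one hq01 hq1.le hac) ht.le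
  have hsle_t : ∀ k : ℕ, q ^ k * t ≤ t := fun k => by
    simpa using hsmono 0 k (Nat.zero_le k)
  set r : ℝ := Real.sqrt q with hrdef
  have hr0 : (0:ℝ) ≤ r := Real.sqrt_nonneg q
  have hr1 : r < 1 := by
    rw [hrdef, show (1:ℝ) = Real.sqrt 1 by simp]
    exact Real.sqrt_lt_sqrt hq01 hq1
  have hrk1 : ∀ k : ℕ, r ^ k ≤ 1 := fun k => pow_le_one₀ hr0 hr1.le
  have h1r : (0:ℝ) < 1 - r := by linarith
  -- measurability
  have hBmeas : ∀ s : ℝ, Measurable (B s) := fun s => (hadp s).mono (ℱ.le s) le_rfl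
  have hHmeas : ∀ (n : ℕ) (s : ℝ), Measurable fun ω => qH q n (B s ω) s :=
    fun n s => (qH_continuous q s n).measurable.comp (hBmeas s)
  -- coefficient bounds
  have hMex : ∀ m : ℕ, ∃ M : ℝ, 0 ≤ M ∧ ∀ s ∈ Set.Icc (0:ℝ) t, m ≤ d → |b m s| ≤ M := by
    intro m
    by_cases hmd : m ≤ d
    · obtain ⟨M, hM⟩ := hb m hmd
      exact ⟨max M 0, le_max_right _ _, fun s hs _ => (hM s hs).trans (le_max_left _ _)⟩
    · exact ⟨0, le_rfl, fun s hs h => absurd h hmd⟩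
  choose M hM0 hMb using hMex
  have hbM : ∀ m ≤ d, ∀ k : ℕ, |b m (q ^ k * t)| ≤ M m := fun m hm k =>
    hMb m _ ⟨(hsp k).le, hsle_t k⟩ hm
  -- sqrt of q^k t
  have hsqrt : ∀ k : ℕ, Real.sqrt (q ^ k * t) = r ^ k * Real.sqrt t := fun k => by
    rw [Real.sqrt_mul (pow_nonneg hq01 k), hrdef, real_sqrt_pow hq01]
  -- the increments
  set term : ℕ → ℕ → Ω → ℝ := fun m k ω => b m (q ^ k * t) *
      (qH q (m + 1) (B (q ^ k * t) ω) (q ^ k * t) -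
       qH q (m + 1) (B (q ^ (k + 1) * t) ω) (q ^ (k + 1) * t)) with hterm
  have htermmeas : ∀ m k : ℕ, Measurable (term m k) := fun m k =>
    (measurable_const.mul ((hHmeas (m+1) (q ^ k * t)).sub (hHmeas (m+1) (q ^ (k+1) * t))))
  set D : ℕ → ℝ := fun m => M m * (2 * qHC q (m + 1) * Real.sqrt t ^ (m + 1)) with hDdef
  have hD0 : ∀ m, 0 ≤ D m := fun m =>
    mul_nonneg (hM0 m) (mul_nonneg (mul_nonneg (by norm_num) (qHC_nonneg hq1 _))
      (pow_nonneg (Real.sqrt_nonneg t) _))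
  -- pointwise bound for qH at time q^k t
  have hHbd : ∀ (n k : ℕ), 1 ≤ n → ∀ x : ℝ, |x| ≤ 2 * Real.sqrt (q ^ k * t) / Real.sqrt (1 - q) →
      |qH q n x (q ^ k * t)| ≤ qHC q n * r ^ k * Real.sqrt t ^ n := by
    intro n k hn x hx
    have h0 := qH_abs_le hq01 hq1 (q ^ k * t) x (hsp k).le hx n
    rw [hsqrt k, mul_pow] at h0
    have h1 : (r ^ k) ^ n ≤ r ^ k := by
      calc (r ^ k) ^ n ≤ (r ^ k) ^ 1 :=
            pow_le_pow_of_le_one (pow_nonneg hr0 k) (hrk1 k) hn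
        _ = r ^ k := pow_one _
    calc |qH q n x (q ^ k * t)| ≤ qHC q n * ((r ^ k) ^ n * Real.sqrt t ^ n) := h0
      _ ≤ qHC q n * (r ^ k * Real.sqrt t ^ n) :=
          mul_le_mul_of_nonneg_left
            (mul_le_mul_of_nonneg_right h1 (pow_nonneg (Real.sqrt_nonneg t) n))
            (qHC_nonneg hq1 n)
      _ = qHC q n * r ^ k * Real.sqrt t ^ n := by ring
  -- a.e. bound event
  have hG : ∀ᵐ ω ∂μ, ∀ k : ℕ, |B (q ^ k * t) ω| ≤ 2 * Real.sqrt (q ^ k * t) / Real.sqrt (1 - q) :=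
    ae_all_iff.mpr fun k => hbdd _ (hsp k).le
  have htermbd : ∀ m, m ≤ d → ∀ᵐ ω ∂μ, ∀ k : ℕ, |term m k ω| ≤ D m * r ^ k := by
    intro m hm
    filter_upwards [hG] with ω hω k
    have h1 := hHbd (m+1) k (Nat.le_add_left 1 m) _ (hω k)
    have h2 := hHbd (m+1) (k+1) (Nat.le_add_left 1 m) _ (hω (k+1))
    have hrr : r ^ (k+1) ≤ r ^ k := pow_le_pow_of_le_one hr0 hr1.le (Nat.le_succ k)
    have hC : 0 ≤ qHC q (m+1) := qHC_nonneg hq1 _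
    have hst : 0 ≤ Real.sqrt t ^ (m+1) := pow_nonneg (Real.sqrt_nonneg t) _
    have h2' : |qH q (m+1) (B (q ^ (k+1) * t) ω) (q ^ (k+1) * t)| ≤
        qHC q (m+1) * r ^ k * Real.sqrt t ^ (m+1) := by
      nlinarith [mul_le_mul_of_nonneg_left hrr (mul_nonneg hC hst)]
    have habs : |qH q (m+1) (B (q ^ k * t) ω) (q ^ k * t) -
        qH q (m+1) (B (q ^ (k+1) * t) ω) (q ^ (k+1) * t)| ≤
        2 * qHC q (m+1) * Real.sqrt t ^ (m+1) * r ^ k := by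
      have := abs_sub (qH q (m+1) (B (q ^ k * t) ω) (q ^ k * t))
        (qH q (m+1) (B (q ^ (k+1) * t) ω) (q ^ (k+1) * t))
      nlinarith
    show |b m (q ^ k * t) * _| ≤ _
    rw [abs_mul]
    calc |b m (q ^ k * t)| * _ ≤ M m * (2 * qHC q (m+1) * Real.sqrt t ^ (m+1) * r ^ k) :=
          mul_le_mul (hbM m hm k) habs (abs_nonneg _) (hM0 m)
      _ = D m * r ^ k := by rw [hDdef]; ring
  have hgeo : Summable fun k : ℕ => r ^ k := summable_geometric_of_lt_one hr0 hr1
  have haegood : ∀ m, m ≤ d → ∀ᵐ ω ∂μ,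
      (Summable fun k => term m k ω) ∧
      (∀ N : ℕ, |∑ k ∈ Finset.range N, term m k ω - ∑' k, term m k ω| ≤
        (D m * (1 - r)⁻¹) * r ^ N) := by
    intro m hm
    filter_upwards [htermbd m hm] with ω hω
    have hsum : Summable fun k => term m k ω :=
      Summable.of_norm_bounded (hgeo.mul_left (D m)) fun k => by
        rw [Real.norm_eq_abs]; exact hω k
    refine ⟨hsum, fun N => ?_⟩
    have htel := hsum.sum_add_tsum_nat_add N
    have hdiff : ∑ k ∈ Finset.range N, term m k ω - ∑' k, term m k ω =
        -∑' i : ℕ, term m (i + N) ω := by linarith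
    rw [hdiff, abs_neg]
    have hgs : HasSum (fun i : ℕ => D m * r ^ (i + N)) ((D m * r ^ N) * (1 - r)⁻¹) := by
      have := (hasSum_geometric_of_lt_one hr0 hr1).mul_left (D m * r ^ N)
      have e : (fun i : ℕ => D m * r ^ (i + N)) = fun i => D m * r ^ N * r ^ i :=
        funext fun i => by rw [pow_add]; ring
      rw [e]; exact this
    have hb2 : ‖∑' i : ℕ, term m (i + N) ω‖ ≤ (D m * r ^ N) * (1 - r)⁻¹ :=
      tsum_of_norm_bounded hgs fun i => by rw [Real.norm_eq_abs]; exact hω (i + N)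
    rw [Real.norm_eq_abs] at hb2
    calc |∑' i : ℕ, term m (i + N) ω| ≤ (D m * r ^ N) * (1 - r)⁻¹ := hb2
      _ = (D m * (1 - r)⁻¹) * r ^ N := by ring
  have hSmeas : ∀ (m N : ℕ), Measurable fun ω => ∑ k ∈ Finset.range N, term m k ω :=
    fun m N => Finset.measurable_sum _ fun k _ => htermmeas m k
  have hJaesm : ∀ m, m ≤ d → AEStronglyMeasurable (fun ω => ∑' k, term m k ω) μ := by
    intro m hm
    refine aestronglyMeasurable_of_tendsto_ae atTop
      (fun N => (hSmeas m N).aestronglyMeasurable) ?_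
    filter_upwards [haegood m hm] with ω hω
    exact hω.1.hasSum.tendsto_sum_nat
  have hJbd : ∀ m, m ≤ d → ∀ᵐ ω ∂μ, |∑' k, term m k ω| ≤ D m * (1 - r)⁻¹ := by
    intro m hm
    filter_upwards [haegood m hm] with ω hω
    have := hω.2 0
    simpa using this
  -- same-time product integrability and second-moment expansion
  have hHHint : ∀ (n m k j : ℕ), Integrable
      (fun ω => qH q n (B (q ^ k * t) ω) (q ^ k * t) * qH q m (B (q ^ j * t) ω) (q ^ j * t)) μ :=
    fun n m k j => qH_mul_integrable hq01 hq1 (hsp j).le (hsp k).le (hBmeas _) (hBmeas _)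
      (hbdd _ (hsp j).le) (hbdd _ (hsp k).le) n m
  have hfk : ∀ k : ℕ, ∫ ω, (∑ m ∈ Finset.range (d + 1),
        b m (q ^ k * t) / qFact q m * qH q m (B (q ^ k * t) ω) (q ^ k * t)) ^ 2 ∂μ =
      ∑ m ∈ Finset.range (d + 1), (b m (q ^ k * t)) ^ 2 / qFact q m * (q ^ k * t) ^ m := by
    intro k
    have hs : 0 < q ^ k * t := hsp k
    have hexp : ∀ ω : Ω, (∑ m ∈ Finset.range (d + 1),
        b m (q ^ k * t) / qFact q m * qH q m (B (q ^ k * t) ω) (q ^ k * t)) ^ 2 =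
        ∑ m ∈ Finset.range (d + 1), ∑ n ∈ Finset.range (d + 1),
          (b m (q ^ k * t) / qFact q m) * (b n (q ^ k * t) / qFact q n) *
          (qH q m (B (q ^ k * t) ω) (q ^ k * t) * qH q n (B (q ^ k * t) ω) (q ^ k * t)) := by
      intro ω
      rw [sq, Finset.sum_mul_sum]
      refine Finset.sum_congr rfl fun m _ => Finset.sum_congr rfl fun n _ => by ring
    calc ∫ ω, (∑ m ∈ Finset.range (d + 1),
          b m (q ^ k * t) / qFact q m * qH q m (B (q ^ k * t) ω) (q ^ k * t)) ^ 2 ∂μ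
        = ∫ ω, ∑ m ∈ Finset.range (d + 1), ∑ n ∈ Finset.range (d + 1),
            (b m (q ^ k * t) / qFact q m) * (b n (q ^ k * t) / qFact q n) *
            (qH q m (B (q ^ k * t) ω) (q ^ k * t) * qH q n (B (q ^ k * t) ω) (q ^ k * t)) ∂μ :=
          integral_congr_ae (Filter.Eventually.of_forall hexp)
      _ = ∑ m ∈ Finset.range (d + 1), ∑ n ∈ Finset.range (d + 1),
            (b m (q ^ k * t) / qFact q m) * (b n (q ^ k * t) / qFact q n) *
            ∫ ω, qH q m (B (q ^ k * t) ω) (q ^ k * t) * qH q n (B (q ^ k * t) ω) (q ^ k * t) ∂μ := by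
          rw [integral_finset_sum _ fun m _ => integrable_finset_sum _ fun n _ =>
            ((hHHint m n k k).const_mul _)]
          refine Finset.sum_congr rfl fun m _ => ?_
          rw [integral_finset_sum _ fun n _ => ((hHHint m n k k).const_mul _)]
          exact Finset.sum_congr rfl fun n _ => integral_const_mul _ _
      _ = ∑ m ∈ Finset.range (d + 1), ∑ n ∈ Finset.range (d + 1),
            (b m (q ^ k * t) / qFact q m) * (b n (q ^ k * t) / qFact q n) *
            (if n = m then qFact q m * (q ^ k * t) ^ m else 0) := by
          refine Finset.sum_congr rfl fun m _ => Finset.sum_congr rfl fun n _ => ?_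
          rw [horth _ hs n m]
      _ = ∑ m ∈ Finset.range (d + 1),
            (b m (q ^ k * t) / qFact q m) * (b m (q ^ k * t) / qFact q m) *
            (qFact q m * (q ^ k * t) ^ m) := by
          refine Finset.sum_congr rfl fun m hmmem => ?_
          rw [Finset.sum_eq_single m (fun n _ hn => by simp [hn])
            (fun h => absurd hmmem h)]
          simp
      _ = ∑ m ∈ Finset.range (d + 1), (b m (q ^ k * t)) ^ 2 / qFact q m * (q ^ k * t) ^ m := by
          refine Finset.sum_congr rfl fun m _ => ?_
          have hF : qFact q m ≠ 0 := (qFact_pos hq01 m).ne'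
          field_simp
  have hsum3 : ∀ (m p : ℕ), m ≤ d →
      Summable fun k : ℕ => q ^ k * ((b m (q ^ k * t)) ^ 2 * (q ^ k * t) ^ p) := by
    intro m p hm
    refine Summable.of_norm_bounded (g := fun k => (M m ^ 2 * t ^ p) * q ^ k)
      ((summable_geometric_of_lt_one hq01 hq1).mul_left _) fun k => ?_
    have h1 : (b m (q ^ k * t)) ^ 2 ≤ M m ^ 2 := by
      rw [← sq_abs]
      exact pow_le_pow_left₀ (abs_nonneg _) (hbM m hm k) 2
    have h2 : (q ^ k * t) ^ p ≤ t ^ p := pow_le_pow_left₀ (hsp k).le (hsle_t k) p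
    have hnn : (0:ℝ) ≤ q ^ k * ((b m (q ^ k * t)) ^ 2 * (q ^ k * t) ^ p) :=
      mul_nonneg (pow_nonneg hq01 k) (mul_nonneg (sq_nonneg _) (pow_nonneg (hsp k).le p))
    rw [Real.norm_eq_abs, abs_of_nonneg hnn]
    calc q ^ k * ((b m (q ^ k * t)) ^ 2 * (q ^ k * t) ^ p)
        ≤ q ^ k * (M m ^ 2 * t ^ p) := by
          refine mul_le_mul_of_nonneg_left ?_ (pow_nonneg hq01 k)
          exact mul_le_mul h1 h2 (pow_nonneg (hsp k).le p) (sq_nonneg _)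
      _ = (M m ^ 2 * t ^ p) * q ^ k := by ring
  -- the Jackson-sum rearrangement (part 3 statement)
  have hpart3 : (1 - q) * t * ∑' k : ℕ, q ^ k *
        ∫ ω, (∑ m ∈ Finset.range (d + 1),
          b m (q ^ k * t) / qFact q m * qH q m (B (q ^ k * t) ω) (q ^ k * t)) ^ 2 ∂μ =
      ∑ m ∈ Finset.range (d + 1), (1 / qFact q m) *
        ((1 - q) * t * ∑' k : ℕ, q ^ k * (b m (q ^ k * t)) ^ 2 * (q ^ k * t) ^ m) := by
    have h1 : ∀ k : ℕ, q ^ k *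
        ∫ ω, (∑ m ∈ Finset.range (d + 1),
          b m (q ^ k * t) / qFact q m * qH q m (B (q ^ k * t) ω) (q ^ k * t)) ^ 2 ∂μ =
        ∑ m ∈ Finset.range (d + 1),
          (1 / qFact q m) * (q ^ k * ((b m (q ^ k * t)) ^ 2 * (q ^ k * t) ^ m)) := by
      intro k
      rw [hfk k, Finset.mul_sum]
      exact Finset.sum_congr rfl fun m _ => by ring
    calc (1 - q) * t * ∑' k : ℕ, q ^ k *
          ∫ ω, (∑ m ∈ Finset.range (d + 1),
            b m (q ^ k * t) / qFact q m * qH q m (B (q ^ k * t) ω) (q ^ k * t)) ^ 2 ∂μ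
        = (1 - q) * t * ∑' k : ℕ, ∑ m ∈ Finset.range (d + 1),
            (1 / qFact q m) * (q ^ k * ((b m (q ^ k * t)) ^ 2 * (q ^ k * t) ^ m)) := by
          rw [tsum_congr h1]
      _ = (1 - q) * t * ∑ m ∈ Finset.range (d + 1), ∑' k : ℕ,
            (1 / qFact q m) * (q ^ k * ((b m (q ^ k * t)) ^ 2 * (q ^ k * t) ^ m)) := by
          rw [Summable.tsum_finsetSum fun m hmmem => ((hsum3 m m
            (Nat.lt_succ_iff.mp (Finset.mem_range.mp hmmem))).mul_left _)]
      _ = ∑ m ∈ Finset.range (d + 1), (1 / qFact q m) *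
            ((1 - q) * t * ∑' k : ℕ, q ^ k * (b m (q ^ k * t)) ^ 2 * (q ^ k * t) ^ m) := by
          rw [Finset.mul_sum]
          refine Finset.sum_congr rfl fun m _ => ?_
          rw [tsum_mul_left]
          have : ∑' k : ℕ, q ^ k * (b m (q ^ k * t)) ^ 2 * (q ^ k * t) ^ m =
              ∑' k : ℕ, q ^ k * ((b m (q ^ k * t)) ^ 2 * (q ^ k * t) ^ m) :=
            tsum_congr fun k => by ring
          rw [this]
          ring
  refine ⟨fun m ω => ∑' k, term m k ω, ?_, ?_, ?_⟩
  · -- part 1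
    intro m hm
    constructor
    · filter_upwards [haegood m hm] with ω hω
      exact hω.1.hasSum.tendsto_sum_nat
    · -- L² convergence
      have hbd : ∀ N : ℕ, (∫ ω, (∑ k ∈ Finset.range N, term m k ω - ∑' k, term m k ω) ^ 2 ∂μ)
          ≤ ((D m * (1 - r)⁻¹) * r ^ N) ^ 2 := by
        intro N
        have hint : Integrable (fun ω =>
            (∑ k ∈ Finset.range N, term m k ω - ∑' k, term m k ω) ^ 2) μ := by
          refine Integrable.mono' (integrable_const (((D m * (1 - r)⁻¹) * r ^ N) ^ 2))
            ((((hSmeas m N).aestronglyMeasurable.sub (hJaesm m hm))).pow 2)  ?_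
          filter_upwards [haegood m hm] with ω hω
          rw [Real.norm_eq_abs, abs_pow, sq_abs]
          have := hω.2 N
          nlinarith [abs_nonneg (∑ k ∈ Finset.range N, term m k ω - ∑' k, term m k ω),
            sq_abs (∑ k ∈ Finset.range N, term m k ω - ∑' k, term m k ω)]
        calc (∫ ω, (∑ k ∈ Finset.range N, term m k ω - ∑' k, term m k ω) ^ 2 ∂μ)
            ≤ ∫ _ω, ((D m * (1 - r)⁻¹) * r ^ N) ^ 2 ∂μ := by
              refine integral_mono_ae hint (integrable_const _) ?_
              filter_upwards [haegood m hm] with ω hω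
              have := hω.2 N
              nlinarith [abs_nonneg (∑ k ∈ Finset.range N, term m k ω - ∑' k, term m k ω),
                sq_abs (∑ k ∈ Finset.range N, term m k ω - ∑' k, term m k ω)]
          _ = ((D m * (1 - r)⁻¹) * r ^ N) ^ 2 := by simp
      have hnn : ∀ N : ℕ, 0 ≤ ∫ ω, (∑ k ∈ Finset.range N, term m k ω - ∑' k, term m k ω) ^ 2 ∂μ :=
        fun N => integral_nonneg fun ω => sq_nonneg _
      have hlim : Tendsto (fun N : ℕ => ((D m * (1 - r)⁻¹) * r ^ N) ^ 2) atTop (nhds 0) := by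
        have h1 : Tendsto (fun N : ℕ => r ^ N) atTop (nhds 0) :=
          tendsto_pow_atTop_nhds_zero_of_lt_one hr0 hr1
        have h2 : Tendsto (fun N : ℕ => ((D m * (1 - r)⁻¹) * r ^ N) ^ 2) atTop
            (nhds (((D m * (1 - r)⁻¹) * 0) ^ 2)) := ((tendsto_const_nhds.mul h1).pow 2)
        simpa using h2
      exact squeeze_zero hnn hbd hlim
  · -- part 2
    rw [hpart3]
    -- lintegral bound helper
    have hlb : ∀ (f : Ω → ℝ) (C : ℝ), (∀ᵐ ω ∂μ, |f ω| ≤ C) →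
        ∫⁻ ω, ‖f ω‖₊ ∂μ ≤ ENNReal.ofReal C := by
      intro f C h
      calc ∫⁻ ω, ‖f ω‖₊ ∂μ ≤ ∫⁻ _ω, ENNReal.ofReal C ∂μ := by
            refine lintegral_mono_ae (h.mono fun ω hω => ?_)
            rw [← enorm_eq_nnnorm, ← ofReal_norm]
            exact ENNReal.ofReal_le_ofReal (by rwa [Real.norm_eq_abs])
        _ = ENNReal.ofReal C := by simp
    -- cross moments of the hermite martingales at two times
    have hpair : ∀ (m n a c : ℕ),
        ∫ ω, qH q (m + 1) (B (q ^ a * t) ω) (q ^ a * t) *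
          qH q (n + 1) (B (q ^ c * t) ω) (q ^ c * t) ∂μ =
        if m = n then qFact q (m + 1) * (q ^ max a c * t) ^ (m + 1) else 0 := by
      intro m n a c
      rcases le_total a c with h | h
      · have := crossE hq01 hq1 ℱ hadp hbdd hmart horth (m + 1) (n + 1)
          (q ^ a * t) (q ^ c * t) (hsp c) (hsmono a c h)
        rw [this, max_eq_right h]
        rcases eq_or_ne m n with rfl | hmn
        · simp
        · simp [hmn, fun hh => hmn (Nat.succ_injective hh), Ne.symm hmn]
      · have hcomm : ∫ ω, qH q (m + 1) (B (q ^ a * t) ω) (q ^ a * t) *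
            qH q (n + 1) (B (q ^ c * t) ω) (q ^ c * t) ∂μ =
            ∫ ω, qH q (n + 1) (B (q ^ c * t) ω) (q ^ c * t) *
              qH q (m + 1) (B (q ^ a * t) ω) (q ^ a * t) ∂μ :=
          integral_congr_ae (Filter.Eventually.of_forall fun ω => mul_comm _ _)
        rw [hcomm, crossE hq01 hq1 ℱ hadp hbdd hmart horth (n + 1) (m + 1)
          (q ^ c * t) (q ^ a * t) (hsp a) (hsmono c a h), max_eq_left h]
        rcases eq_or_ne m n with rfl | hmn
        · simp
        · simp [hmn, fun hh => hmn (Nat.succ_injective hh), Ne.symm hmn]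
    -- product of increments
    have hDD : ∀ m n k j : ℕ,
        ∫ ω, term m k ω * term n j ω ∂μ =
        if m = n ∧ k = j then
          (b m (q ^ k * t)) ^ 2 * ((1 - q ^ (m + 1)) * qFact q (m + 1) * (q ^ k * t) ^ (m + 1))
        else 0 := by
      intro m n k j
      have hptws : ∀ ω : Ω, term m k ω * term n j ω =
          (b m (q ^ k * t) * b n (q ^ j * t)) *
          ((qH q (m + 1) (B (q ^ k * t) ω) (q ^ k * t) *
              qH q (n + 1) (B (q ^ j * t) ω) (q ^ j * t) -
            qH q (m + 1) (B (q ^ k * t) ω) (q ^ k * t) *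
              qH q (n + 1) (B (q ^ (j + 1) * t) ω) (q ^ (j + 1) * t)) -
           (qH q (m + 1) (B (q ^ (k + 1) * t) ω) (q ^ (k + 1) * t) *
              qH q (n + 1) (B (q ^ j * t) ω) (q ^ j * t) -
            qH q (m + 1) (B (q ^ (k + 1) * t) ω) (q ^ (k + 1) * t) *
              qH q (n + 1) (B (q ^ (j + 1) * t) ω) (q ^ (j + 1) * t))) := by
        intro ω; simp only [hterm]; ring
      have hi1 : Integrable (fun ω =>
          qH q (m + 1) (B (q ^ k * t) ω) (q ^ k * t) * qH q (n + 1) (B (q ^ j * t) ω) (q ^ j * t) -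
          qH q (m + 1) (B (q ^ k * t) ω) (q ^ k * t) *
            qH q (n + 1) (B (q ^ (j + 1) * t) ω) (q ^ (j + 1) * t)) μ :=
        (hHHint (m+1) (n+1) k j).sub (hHHint (m+1) (n+1) k (j+1))
      have hi2 : Integrable (fun ω =>
          qH q (m + 1) (B (q ^ (k + 1) * t) ω) (q ^ (k + 1) * t) *
            qH q (n + 1) (B (q ^ j * t) ω) (q ^ j * t) -
          qH q (m + 1) (B (q ^ (k + 1) * t) ω) (q ^ (k + 1) * t) *
            qH q (n + 1) (B (q ^ (j + 1) * t) ω) (q ^ (j + 1) * t)) μ :=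
        (hHHint (m+1) (n+1) (k+1) j).sub (hHHint (m+1) (n+1) (k+1) (j+1))
      rw [integral_congr_ae (Filter.Eventually.of_forall hptws), integral_const_mul,
        integral_sub hi1 hi2,
        integral_sub (hHHint (m+1) (n+1) k j) (hHHint (m+1) (n+1) k (j+1)),
        integral_sub (hHHint (m+1) (n+1) (k+1) j) (hHHint (m+1) (n+1) (k+1) (j+1)),
        hpair m n k j, hpair m n k (j+1), hpair m n (k+1) j, hpair m n (k+1) (j+1)]
      rcases eq_or_ne m n with rfl | hmn
      · simp only [eq_self_iff_true, true_and, ite_true]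
        rcases Nat.lt_trichotomy k j with hkj | rfl | hjk
        · rw [max_eq_right hkj.le, max_eq_right (hkj.le.trans (Nat.le_succ j)),
            max_eq_right (Nat.succ_le_of_lt hkj), max_eq_right (Nat.succ_le_succ hkj.le),
            if_neg hkj.ne]
          ring
        · rw [max_self, max_eq_right (Nat.le_succ k), max_eq_left (Nat.le_succ k),
            max_self]
          simp only [eq_self_iff_true, ite_true]
          rw [pow_succ q k]
          ring
        · rw [max_eq_left hjk.le, max_eq_left (Nat.succ_le_of_lt hjk),
            max_eq_left (hjk.le.trans (Nat.le_succ k)), max_eq_left (Nat.succ_le_succ hjk.le),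
            if_neg (by omega : ¬ k = j)]
          ring
      · simp [hmn]
    -- termwise integral against the full series
    have htermJ : ∀ m n : ℕ, m ≤ d → n ≤ d → ∀ k : ℕ,
        ∫ ω, term m k ω * (∑' j : ℕ, term n j ω) ∂μ =
        if m = n then
          (b m (q ^ k * t)) ^ 2 * ((1 - q ^ (m + 1)) * qFact q (m + 1) * (q ^ k * t) ^ (m + 1))
        else 0 := by
      intro m n hm hn k
      have hptw : ∀ ω : Ω, term m k ω * (∑' j : ℕ, term n j ω) =
          ∑' j : ℕ, term m k ω * term n j ω := fun ω => (tsum_mul_left).symm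
      rw [integral_congr_ae (Filter.Eventually.of_forall hptw)]
      have haesm : ∀ j : ℕ, AEStronglyMeasurable (fun ω => term m k ω * term n j ω) μ :=
        fun j => ((htermmeas m k).mul (htermmeas n j)).aestronglyMeasurable
      have hfin : ∑' j : ℕ, ∫⁻ ω, ‖term m k ω * term n j ω‖₊ ∂μ ≠ ⊤ := by
        have hbnd : ∀ j : ℕ, ∫⁻ ω, ‖term m k ω * term n j ω‖₊ ∂μ ≤
            ENNReal.ofReal (D m * D n * r ^ j) := by
          intro j
          refine hlb _ _ ?_
          filter_upwards [htermbd m hm, htermbd n hn] with ω h1 h2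
          rw [abs_mul]
          have hk1 : |term m k ω| ≤ D m := by
            have := h1 k
            nlinarith [pow_nonneg hr0 k, hrk1 k, hD0 m]
          calc |term m k ω| * |term n j ω| ≤ D m * (D n * r ^ j) :=
                mul_le_mul hk1 (h2 j) (abs_nonneg _) (hD0 m)
            _ = D m * D n * r ^ j := by ring
        refine ne_top_of_le_ne_top ?_ (ENNReal.tsum_le_tsum hbnd)
        rw [← ENNReal.ofReal_tsum_of_nonneg
          (fun j => mul_nonneg (mul_nonneg (hD0 m) (hD0 n)) (pow_nonneg hr0 j))
          ((hgeo.mul_left (D m * D n)))]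
        exact ENNReal.ofReal_ne_top
      rw [integral_tsum haesm hfin]
      rw [tsum_eq_single k (fun j hj => by rw [hDD m n k j]; simp [Ne.symm hj])]
      rw [hDD m n k k]
      simp
    -- second moments of the stochastic integrals
    have hJJ : ∀ m n : ℕ, m ≤ d → n ≤ d →
        ∫ ω, (∑' k : ℕ, term m k ω) * (∑' k : ℕ, term n k ω) ∂μ =
        if m = n then
          (1 - q ^ (m + 1)) * qFact q (m + 1) *
            ∑' k : ℕ, (b m (q ^ k * t)) ^ 2 * (q ^ k * t) ^ (m + 1)
        else 0 := by
      intro m n hm hn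
      have hptw : ∀ ω : Ω, (∑' k : ℕ, term m k ω) * (∑' k : ℕ, term n k ω) =
          ∑' k : ℕ, term m k ω * (∑' j : ℕ, term n j ω) := fun ω => (tsum_mul_right).symm
      rw [integral_congr_ae (Filter.Eventually.of_forall hptw)]
      have haesm : ∀ k : ℕ, AEStronglyMeasurable
          (fun ω => term m k ω * (∑' j : ℕ, term n j ω)) μ :=
        fun k => (htermmeas m k).aestronglyMeasurable.mul (hJaesm n hn)
      have hfin : ∑' k : ℕ, ∫⁻ ω, ‖term m k ω * (∑' j : ℕ, term n j ω)‖₊ ∂μ ≠ ⊤ := by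
        have hbnd : ∀ k : ℕ, ∫⁻ ω, ‖term m k ω * (∑' j : ℕ, term n j ω)‖₊ ∂μ ≤
            ENNReal.ofReal (D m * (D n * (1 - r)⁻¹) * r ^ k) := by
          intro k
          refine hlb _ _ ?_
          filter_upwards [htermbd m hm, hJbd n hn] with ω h1 h2
          rw [abs_mul]
          calc |term m k ω| * |∑' j : ℕ, term n j ω| ≤ (D m * r ^ k) * (D n * (1 - r)⁻¹) :=
                mul_le_mul (h1 k) h2 (abs_nonneg _)
                  (mul_nonneg (hD0 m) (pow_nonneg hr0 k))
            _ = D m * (D n * (1 - r)⁻¹) * r ^ k := by ring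
        refine ne_top_of_le_ne_top ?_ (ENNReal.tsum_le_tsum hbnd)
        rw [← ENNReal.ofReal_tsum_of_nonneg
          (fun k => mul_nonneg (mul_nonneg (hD0 m) (mul_nonneg (hD0 n)
            (inv_nonneg.mpr h1r.le))) (pow_nonneg hr0 k))
          ((hgeo.mul_left (D m * (D n * (1 - r)⁻¹))))]
        exact ENNReal.ofReal_ne_top
      rw [integral_tsum haesm hfin, tsum_congr (htermJ m n hm hn)]
      rcases eq_or_ne m n with rfl | hmn
      · have h2 : ∀ k : ℕ, (if m = m then (b m (q ^ k * t)) ^ 2 *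
            ((1 - q ^ (m + 1)) * qFact q (m + 1) * (q ^ k * t) ^ (m + 1)) else 0) =
            ((1 - q ^ (m + 1)) * qFact q (m + 1)) *
              ((b m (q ^ k * t)) ^ 2 * (q ^ k * t) ^ (m + 1)) := fun k => by
          rw [if_pos rfl]; ring
        rw [tsum_congr h2, tsum_mul_left, if_pos rfl]
      · simp [hmn]
    -- J is integrable against itself
    have hJJint : ∀ m n : ℕ, m ≤ d → n ≤ d →
        Integrable (fun ω => (∑' k : ℕ, term m k ω) * (∑' k : ℕ, term n k ω)) μ := by
      intro m n hm hn
      refine Integrable.mono' (integrable_const ((D m * (1 - r)⁻¹) * (D n * (1 - r)⁻¹)))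
        ((hJaesm m hm).mul (hJaesm n hn)) ?_
      filter_upwards [hJbd m hm, hJbd n hn] with ω h1 h2
      rw [Real.norm_eq_abs, abs_mul]
      exact mul_le_mul h1 h2 (abs_nonneg _) (mul_nonneg (hD0 m) (inv_nonneg.mpr h1r.le))
    -- expand the square of I
    have hkey : ∫ ω, (∑ m ∈ Finset.range (d + 1),
          (1 / qFact q (m + 1)) * ∑' k : ℕ, term m k ω) ^ 2 ∂μ =
        ∑ m ∈ Finset.range (d + 1), (1 / qFact q m) *
          ((1 - q) * t * ∑' k : ℕ, q ^ k * (b m (q ^ k * t)) ^ 2 * (q ^ k * t) ^ m) := by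
      have hmem : ∀ m : ℕ, m ∈ Finset.range (d + 1) → m ≤ d :=
        fun m hmm => Nat.lt_succ_iff.mp (Finset.mem_range.mp hmm)
      have hexp : ∀ ω : Ω, (∑ m ∈ Finset.range (d + 1),
          (1 / qFact q (m + 1)) * ∑' k : ℕ, term m k ω) ^ 2 =
          ∑ m ∈ Finset.range (d + 1), ∑ n ∈ Finset.range (d + 1),
            (1 / qFact q (m + 1)) * (1 / qFact q (n + 1)) *
              ((∑' k : ℕ, term m k ω) * (∑' k : ℕ, term n k ω)) := by
        intro ω
        rw [sq, Finset.sum_mul_sum]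
        exact Finset.sum_congr rfl fun m _ => Finset.sum_congr rfl fun n _ => by ring
      calc ∫ ω, (∑ m ∈ Finset.range (d + 1),
            (1 / qFact q (m + 1)) * ∑' k : ℕ, term m k ω) ^ 2 ∂μ
          = ∑ m ∈ Finset.range (d + 1), ∑ n ∈ Finset.range (d + 1),
              (1 / qFact q (m + 1)) * (1 / qFact q (n + 1)) *
                ∫ ω, (∑' k : ℕ, term m k ω) * (∑' k : ℕ, term n k ω) ∂μ := by
            rw [integral_congr_ae (Filter.Eventually.of_forall hexp),
              integral_finset_sum _ fun m hmm => integrable_finset_sum _ fun n hnn =>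
                ((hJJint m n (hmem m hmm) (hmem n hnn)).const_mul _)]
            refine Finset.sum_congr rfl fun m hmm => ?_
            rw [integral_finset_sum _ fun n hnn =>
              ((hJJint m n (hmem m hmm) (hmem n hnn)).const_mul _)]
            exact Finset.sum_congr rfl fun n _ => integral_const_mul _ _
        _ = ∑ m ∈ Finset.range (d + 1),
              (1 / qFact q (m + 1)) * (1 / qFact q (m + 1)) *
                ((1 - q ^ (m + 1)) * qFact q (m + 1) *
                  ∑' k : ℕ, (b m (q ^ k * t)) ^ 2 * (q ^ k * t) ^ (m + 1)) := by
            refine Finset.sum_congr rfl fun m hmm => ?_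
            rw [Finset.sum_eq_single m
              (fun n hnn hne => by
                rw [hJJ m n (hmem m hmm) (hmem n hnn), if_neg (Ne.symm hne)]; ring
                )
              (fun h => absurd hmm h)]
            rw [hJJ m m (hmem m hmm) (hmem m hmm), if_pos rfl]
        _ = ∑ m ∈ Finset.range (d + 1), (1 / qFact q m) *
              ((1 - q) * t * ∑' k : ℕ, q ^ k * (b m (q ^ k * t)) ^ 2 * (q ^ k * t) ^ m) := by
            refine Finset.sum_congr rfl fun m _ => ?_
            have hFm : qFact q m ≠ 0 := (qFact_pos hq01 m).ne'
            have hNm : qNat q (m + 1) ≠ 0 := (qNat_pos hq01 m).ne'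
            have hFs : qFact q (m + 1) = qFact q m * qNat q (m + 1) := qFact_succ q m
            have hqn : (1 : ℝ) - q ^ (m + 1) = (1 - q) * qNat q (m + 1) :=
              (one_sub_mul_qNat q (m + 1)).symm
            have htsum : t * ∑' k : ℕ, q ^ k * (b m (q ^ k * t)) ^ 2 * (q ^ k * t) ^ m =
                ∑' k : ℕ, (b m (q ^ k * t)) ^ 2 * (q ^ k * t) ^ (m + 1) := by
              rw [← tsum_mul_left]
              exact tsum_congr fun k => by rw [pow_succ]; ring
            rw [← htsum, hqn, hFs]
            field_simp
    exact hkey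
  · -- part 3
    exact hpart3
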